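/- arXiv:1003.3123 — 4 statements merged into one kernel-verified Lean document; each statement's English description precedes it below -/
import Mathlib

section
/- Let 𝒜 ⊆ M_n(ℂ) be a logmodular subalgebra. Then there exist complex scalars α_{ij} and β_{ij} for i, j ∈ {1,...,n} such that: each row of the matrix [α_{ij}] is a non-zero vector; each column of the matrix [β_{ij}] is a non-zero vector; for every i ∈ {1,...,n} the matrix Σ_k α_{ik} E_{i,k} (whose only possibly non-zero row is the i-th row, with entries α_{i1},...,α_{in}) belongs to 𝒜; and for every j ∈ {1,...,n} the matrix Σ_k β_{kj} E_{k,j} (whose only possibly non-zero column is the j-th column, with entries β_{1j},...,β_{nj}) belongs to 𝒜. -/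
open scoped ComplexOrder

/-- A (closed unital) subalgebra `A ⊆ Mₙ(ℂ)` is *logmodular* if the set
`{a* a : a ∈ A, a invertible in A}` is dense in the set of positive invertible
(i.e. positive definite) matrices. -/
def IsLogmodular {n : ℕ} (A : Subalgebra ℂ (Matrix (Fin n) (Fin n) ℂ)) : Prop :=
  ∀ b : Matrix (Fin n) (Fin n) ℂ, b.PosDef →
    b ∈ closure {x : Matrix (Fin n) (Fin n) ℂ |
      ∃ a ∈ A, (∃ a' ∈ A, a * a' = 1 ∧ a' * a = 1) ∧ x = star a * a}

namespace LogmodAux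

open Matrix

attribute [local instance] Matrix.frobeniusNormedAddCommGroup Matrix.frobeniusNormedRing
  Matrix.frobeniusNormedSpace

variable {n : ℕ}

theorem diag_star_mul (c : Matrix (Fin n) (Fin n) ℂ) (j : Fin n) :
    (star c * c) j j = ∑ k, (Complex.normSq (c k j) : ℂ) := by
  simp only [Matrix.mul_apply, Matrix.star_apply, Matrix.conjTranspose_apply]
  congr 1; ext k
  rw [mul_comm]; exact Complex.mul_conj _

theorem diag_mul_star (c : Matrix (Fin n) (Fin n) ℂ) (j : Fin n) :
    (c * star c) j j = ∑ k, (Complex.normSq (c j k) : ℂ) := by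
  simp only [Matrix.mul_apply, Matrix.star_apply, Matrix.conjTranspose_apply]
  congr 1; ext k
  exact Complex.mul_conj _

theorem frob_sq (c : Matrix (Fin n) (Fin n) ℂ) :
    ‖c‖ ^ 2 = ∑ a, ∑ b, Complex.normSq (c a b) := by
  rw [Matrix.frobenius_norm_def, ← Real.rpow_natCast _ 2, ← Real.rpow_mul]
  · norm_num
    congr 1; ext a; congr 1; ext b
    exact Complex.sq_norm _
  · positivity

theorem entry_le_frob (M : Matrix (Fin n) (Fin n) ℂ) (i j : Fin n) :
    ‖M i j‖ ≤ ‖M‖ := by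
  have h1 : ‖M i j‖ ^ 2 ≤ ‖M‖ ^ 2 := by
    rw [frob_sq]
    calc ‖M i j‖ ^ 2 = Complex.normSq (M i j) := Complex.sq_norm _
      _ ≤ ∑ b, Complex.normSq (M i b) :=
          Finset.single_le_sum (f := fun b => Complex.normSq (M i b))
            (fun b _ => Complex.normSq_nonneg _) (Finset.mem_univ j)
      _ ≤ _ := Finset.single_le_sum (f := fun a => ∑ b, Complex.normSq (M a b))
          (fun a _ => Finset.sum_nonneg fun b _ => Complex.normSq_nonneg _) (Finset.mem_univ i)
  nlinarith [norm_nonneg (M i j), norm_nonneg M]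

theorem norm_diagonal_le (v : Fin n → ℂ) (B : ℝ) (hB : 0 ≤ B)
    (h : ∀ j, ‖v j‖ ≤ B) : ‖diagonal v‖ ≤ ((n : ℝ) + 1) * B := by
  have h1 : ‖diagonal v‖ ^ 2 = ∑ j, Complex.normSq (v j) := by
    rw [frob_sq]
    simp [Matrix.diagonal_apply, apply_ite Complex.normSq, Finset.sum_ite_eq]
  have h2 : ∑ j, Complex.normSq (v j) ≤ (n : ℝ) * B ^ 2 := by
    calc ∑ j, Complex.normSq (v j) ≤ ∑ _j : Fin n, B ^ 2 := by
          refine Finset.sum_le_sum fun j _ => ?_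
          have := h j
          nlinarith [Complex.sq_norm (v j), norm_nonneg (v j)]
      _ = (n : ℝ) * B ^ 2 := by simp [mul_comm]
  have hn : (0:ℝ) ≤ (n:ℝ) := Nat.cast_nonneg n
  nlinarith [norm_nonneg (diagonal v), sq_nonneg B, mul_nonneg hn hB, sq_nonneg ((n:ℝ)*B)]

theorem stdBasis_eq_diagonal (i : Fin n) :
    single i i (1:ℂ) = diagonal (fun j => if j = i then 1 else 0) := by
  ext a b
  rw [Matrix.single, Matrix.diagonal_apply, Matrix.of_apply]
  by_cases hab : a = b
  · subst hab
    by_cases hai : a = i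
    · simp [hai]
    · simp [hai, Ne.symm hai]
  · simp only [if_neg hab]
    rw [if_neg]
    rintro ⟨h1, h2⟩; exact hab (h1.symm.trans h2)

theorem norm_one_le : ‖(1 : Matrix (Fin n) (Fin n) ℂ)‖ ≤ (n:ℝ)+1 := by
  have h : (1 : Matrix (Fin n) (Fin n) ℂ) = diagonal (fun _ => 1) := (Matrix.diagonal_one).symm
  rw [h]
  simpa using norm_diagonal_le (fun _ => (1:ℂ)) 1 zero_le_one (fun j => by simp)

theorem inv_near_one (Y v : Matrix (Fin n) (Fin n) ℂ) (h1 : Y * v = 1)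
    (hs : ‖1 - Y‖ ≤ 1/2) : ‖v - 1‖ ≤ 2*((n:ℝ)+1)*‖1 - Y‖ := by
  have e : v - 1 = (1 - Y) * v := by rw [sub_mul, one_mul, h1]
  have hb : ‖v - 1‖ ≤ ‖1 - Y‖ * ‖v‖ := e ▸ norm_mul_le _ _
  have hv : ‖v‖ ≤ ‖v - 1‖ + ((n:ℝ)+1) := by
    calc ‖v‖ ≤ ‖v - 1‖ + ‖(1 : Matrix (Fin n) (Fin n) ℂ)‖ := by
          simpa using norm_add_le (v - 1) 1
      _ ≤ _ := by have := norm_one_le (n := n); linarith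
  have hnn : (0:ℝ) ≤ ‖1 - Y‖ := norm_nonneg _
  nlinarith [norm_nonneg (v - 1)]

theorem norm_le_of_close_diag (c : Matrix (Fin n) (Fin n) ℂ)
    (h : ∑ a, ∑ b, Complex.normSq (c a b) ≤ ((n:ℝ)+1) * ((n:ℝ)+2)) : ‖c‖ ≤ (n:ℝ)+2 := by
  have h1 := frob_sq c
  have hn : (0:ℝ) ≤ (n:ℝ) := Nat.cast_nonneg n
  nlinarith [norm_nonneg c]

variable (A : Subalgebra ℂ (Matrix (Fin n) (Fin n) ℂ))

theorem approx (hlog : IsLogmodular A) (b : Matrix (Fin n) (Fin n) ℂ) (hb : b.PosDef)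
    (ε : ℝ) (hε : 0 < ε) :
    ∃ a a' : Matrix (Fin n) (Fin n) ℂ, a ∈ A ∧ a' ∈ A ∧ a * a' = 1 ∧ a' * a = 1 ∧
      ‖star a * a - b‖ < ε := by
  have h := hlog b hb
  replace h := Metric.mem_closure_iff.mp h
  obtain ⟨x, hx, hd⟩ := h ε hε
  obtain ⟨a, haA, ⟨a', ha'A, h1, h2⟩, rfl⟩ := hx
  exact ⟨a, a', haA, ha'A, h1, h2, by rwa [dist_comm, dist_eq_norm] at hd⟩

theorem exists_exact (hclosed : IsClosed (A : Set (Matrix (Fin n) (Fin n) ℂ)))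
    (f : Matrix (Fin n) (Fin n) ℂ → Matrix (Fin n) (Fin n) ℂ) (hf : Continuous f)
    (T : Matrix (Fin n) (Fin n) ℂ)
    (happrox : ∀ ε : ℝ, 0 < ε → ∃ c ∈ A, ‖c‖ ≤ (n:ℝ)+2 ∧ ‖f c - T‖ < ε) :
    ∃ c ∈ A, f c = T := by
  have hK : IsCompact ((A : Set (Matrix (Fin n) (Fin n) ℂ)) ∩
      Metric.closedBall 0 ((n:ℝ)+2)) :=
    (isCompact_closedBall 0 _).inter_left hclosed
  have hS : IsCompact (f '' ((A : Set (Matrix (Fin n) (Fin n) ℂ)) ∩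
      Metric.closedBall 0 ((n:ℝ)+2))) := hK.image hf
  have hT : T ∈ closure (f '' ((A : Set (Matrix (Fin n) (Fin n) ℂ)) ∩
      Metric.closedBall 0 ((n:ℝ)+2))) := by
    refine Metric.mem_closure_iff.mpr ?_
    intro ε hε
    obtain ⟨c, hcA, hcn, hcf⟩ := happrox ε hε
    refine ⟨f c, Set.mem_image_of_mem f ⟨hcA, ?_⟩, ?_⟩
    · simpa [Metric.mem_closedBall, dist_eq_norm] using hcn
    · rw [dist_eq_norm, norm_sub_rev]; exact hcf
  rw [hS.isClosed.closure_eq] at hT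
  obtain ⟨c, ⟨hcA, _⟩, hfc⟩ := hT
  exact ⟨c, hcA, hfc⟩

theorem norm_le_col (c : Matrix (Fin n) (Fin n) ℂ)
    (h : ‖star c * c‖ ≤ (n:ℝ)+2) : ‖c‖ ≤ (n:ℝ)+2 := by
  refine norm_le_of_close_diag c ?_
  rw [Finset.sum_comm]
  calc ∑ b, ∑ a, Complex.normSq (c a b)
      ≤ ∑ _b : Fin n, ((n:ℝ)+2) := by
        refine Finset.sum_le_sum fun b _ => ?_
        have h1 : ((star c * c) b b) = ((∑ a, Complex.normSq (c a b) : ℝ) : ℂ) := by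
          rw [diag_star_mul]; push_cast; rfl
        have h2 := entry_le_frob (star c * c) b b
        rw [h1, Complex.norm_real, Real.norm_eq_abs,
          abs_of_nonneg (Finset.sum_nonneg fun a _ => Complex.normSq_nonneg _)] at h2
        linarith
    _ ≤ ((n:ℝ)+1) * ((n:ℝ)+2) := by
        simp only [Finset.sum_const, Finset.card_univ, Fintype.card_fin, nsmul_eq_mul]
        have hn : (0:ℝ) ≤ (n:ℝ) := Nat.cast_nonneg n
        nlinarith

theorem norm_le_row (c : Matrix (Fin n) (Fin n) ℂ)
    (h : ‖c * star c‖ ≤ (n:ℝ)+2) : ‖c‖ ≤ (n:ℝ)+2 := by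
  refine norm_le_of_close_diag c ?_
  calc ∑ a, ∑ b, Complex.normSq (c a b)
      ≤ ∑ _a : Fin n, ((n:ℝ)+2) := by
        refine Finset.sum_le_sum fun a _ => ?_
        have h1 : ((c * star c) a a) = ((∑ b, Complex.normSq (c a b) : ℝ) : ℂ) := by
          rw [diag_mul_star]; push_cast; rfl
        have h2 := entry_le_frob (c * star c) a a
        rw [h1, Complex.norm_real, Real.norm_eq_abs,
          abs_of_nonneg (Finset.sum_nonneg fun b _ => Complex.normSq_nonneg _)] at h2
        linarith
    _ ≤ ((n:ℝ)+1) * ((n:ℝ)+2) := by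
        simp only [Finset.sum_const, Finset.card_univ, Fintype.card_fin, nsmul_eq_mul]
        have hn : (0:ℝ) ≤ (n:ℝ) := Nat.cast_nonneg n
        nlinarith

theorem norm_E_le (i : Fin n) : ‖single i i (1:ℂ)‖ ≤ (n:ℝ)+1 := by
  rw [stdBasis_eq_diagonal]
  have := norm_diagonal_le (fun j => if j = i then (1:ℂ) else 0) 1 zero_le_one
    (fun j => by by_cases hj : j = i <;> simp [hj])
  simpa using this

theorem col_exists (hclosed : IsClosed (A : Set (Matrix (Fin n) (Fin n) ℂ)))
    (hlog : IsLogmodular A) (i : Fin n) :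
    ∃ c ∈ A, star c * c = single i i (1:ℂ) := by
  refine exists_exact A hclosed (fun c => star c * c)
    (continuous_star.mul continuous_id) _ (fun ε hε => ?_)
  set ε' := min ε 1 with hε'def
  have hε' : 0 < ε' := lt_min hε one_pos
  have hε'le : ε' ≤ ε := min_le_left _ _
  have hε'1 : ε' ≤ 1 := min_le_right _ _
  set t : ℝ := Real.sqrt (4*((n:ℝ)+1)/ε') + 1 with ht
  have ht1 : 1 ≤ t := le_add_of_nonneg_left (Real.sqrt_nonneg _)
  have ht0 : 0 < t := lt_of_lt_of_le one_pos ht1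
  have ht2 : (0:ℝ) < t^2 := pow_pos ht0 2
  have htsq : 4*((n:ℝ)+1)/ε' ≤ t^2 := by
    have h := Real.sq_sqrt (show (0:ℝ) ≤ 4*((n:ℝ)+1)/ε' by positivity)
    nlinarith [Real.sqrt_nonneg (4*((n:ℝ)+1)/ε')]
  have h4 : 4*((n:ℝ)+1) ≤ ε' * t^2 := by
    rw [div_le_iff₀ hε'] at htsq; linarith
  have hkey : ((n:ℝ)+1) * (t^2)⁻¹ ≤ ε'/4 := by
    rw [← div_eq_mul_inv, div_le_div_iff₀ ht2 (by norm_num)]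
    linarith
  set τ : ℂ := ((t:ℝ) : ℂ) with hτ
  have hτ0 : τ ≠ 0 := Complex.ofReal_ne_zero.mpr (ne_of_gt ht0)
  have hττ : τ^2 = ((t^2 : ℝ) : ℂ) := by push_cast; ring
  have hτ20 : τ^2 ≠ 0 := pow_ne_zero 2 hτ0
  set d : Fin n → ℂ := fun j => if j = i then ((t^2 : ℝ) : ℂ) else 1 with hd
  have hD : (Matrix.diagonal d).PosDef := by
    refine Matrix.PosDef.diagonal fun j => ?_
    by_cases hj : j = i
    · simp only [hd, if_pos hj]
      exact Complex.zero_lt_real.mpr ht2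
    · simp only [hd, if_neg hj]
      exact zero_lt_one
  obtain ⟨a, a', haA, ha'A, hm1, hm2, hdist⟩ :=
    approx A hlog (Matrix.diagonal d) hD (ε'/2 * t^2) (mul_pos (half_pos hε') ht2)
  set X := star a * a with hX
  set c : Matrix (Fin n) (Fin n) ℂ := τ⁻¹ • a with hc
  have hcA : c ∈ A := A.smul_mem haA _
  have hcc : star c * c = (τ^2)⁻¹ • X := by
    rw [hc, star_smul, smul_mul_assoc, mul_smul_comm, smul_smul]
    congr 1
    rw [star_inv₀, show star τ = τ by simp [hτ, Complex.conj_ofReal], ← mul_inv, sq]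
  have hτ2 : ‖(τ^2)⁻¹‖ = (t^2)⁻¹ := by
    rw [norm_inv, norm_pow, hτ, Complex.norm_real, Real.norm_eq_abs, abs_of_pos ht0]
  have hdec : star c * c - single i i (1:ℂ) =
      (τ^2)⁻¹ • (X - Matrix.diagonal d) +
      ((τ^2)⁻¹ • Matrix.diagonal d - single i i (1:ℂ)) := by
    rw [hcc, smul_sub]; abel
  have hterm1 : ‖(τ^2)⁻¹ • (X - Matrix.diagonal d)‖ < ε'/2 := by
    rw [norm_smul, hτ2]
    calc (t^2)⁻¹ * ‖X - Matrix.diagonal d‖ < (t^2)⁻¹ * (ε'/2 * t^2) :=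
          mul_lt_mul_of_pos_left hdist (by positivity)
      _ = ε'/2 := by field_simp
  have habs : ‖(τ^2)⁻¹‖ = (t^2)⁻¹ := by
    rw [norm_inv, hττ, Complex.norm_real, Real.norm_eq_abs, abs_of_pos ht2]
  have hterm2 : ‖(τ^2)⁻¹ • Matrix.diagonal d - single i i (1:ℂ)‖ ≤ ε'/4 := by
    have heq : (τ^2)⁻¹ • Matrix.diagonal d - single i i (1:ℂ) =
        Matrix.diagonal (fun j => if j = i then 0 else (τ^2)⁻¹) := by
      rw [stdBasis_eq_diagonal]
      ext p q
      by_cases hpq : p = q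
      · subst hpq
        by_cases hpi : p = i
        · simp [Matrix.sub_apply, Matrix.smul_apply, Matrix.diagonal_apply_eq, hd, hpi,
            smul_eq_mul, ← hττ, inv_mul_cancel₀ hτ20]
        · simp [Matrix.sub_apply, Matrix.smul_apply, Matrix.diagonal_apply_eq, hd, hpi,
            smul_eq_mul]
      · simp [Matrix.sub_apply, Matrix.smul_apply, Matrix.diagonal_apply_ne, hpq]
    rw [heq]
    calc ‖Matrix.diagonal (fun j => if j = i then 0 else (τ^2)⁻¹)‖
        ≤ ((n:ℝ)+1) * (t^2)⁻¹ := by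
          refine norm_diagonal_le _ _ (by positivity) fun j => ?_
          by_cases hj : j = i
          · simp [hj]; positivity
          · simp only [if_neg hj]; rw [habs]
      _ ≤ ε'/4 := hkey
  have hclose : ‖star c * c - single i i (1:ℂ)‖ < ε' := by
    rw [hdec]
    calc ‖_ + _‖ ≤ _ + _ := norm_add_le _ _
      _ < ε' := by linarith
  refine ⟨c, hcA, ?_, lt_of_lt_of_le hclose hε'le⟩
  refine norm_le_col c ?_
  calc ‖star c * c‖ ≤ ‖star c * c - single i i (1:ℂ)‖ + ‖single i i (1:ℂ)‖ := by
        simpa using norm_add_le (star c * c - single i i (1:ℂ)) (single i i (1:ℂ))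
    _ ≤ (n:ℝ)+2 := by have := norm_E_le (n := n) i; linarith

theorem norm_triple (P M R : Matrix (Fin n) (Fin n) ℂ) (BP BM : ℝ)
    (hP : ‖P‖ ≤ BP) (hM : ‖M‖ ≤ BM) (hR : ‖R‖ ≤ BP) (hBM : 0 ≤ BM) :
    ‖P * M * R‖ ≤ BP * BM * BP := by
  have h0 : (0:ℝ) ≤ BP := le_trans (norm_nonneg P) hP
  calc ‖P * M * R‖ ≤ ‖P * M‖ * ‖R‖ := norm_mul_le _ _
    _ ≤ (‖P‖ * ‖M‖) * ‖R‖ :=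
        mul_le_mul_of_nonneg_right (norm_mul_le _ _) (norm_nonneg _)
    _ ≤ (BP * BM) * BP := by
        refine mul_le_mul (mul_le_mul hP hM (norm_nonneg _) h0) hR (norm_nonneg _) ?_
        exact mul_nonneg h0 hBM

theorem diagonal_eq_one (f : Fin n → ℂ) (h : ∀ j, f j = 1) :
    Matrix.diagonal f = 1 := by
  rw [show f = fun _ => 1 from funext h, Matrix.diagonal_one]

theorem row_exists (hclosed : IsClosed (A : Set (Matrix (Fin n) (Fin n) ℂ)))
    (hlog : IsLogmodular A) (i : Fin n) :
    ∃ c ∈ A, c * star c = single i i (1:ℂ) := by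
  refine exists_exact A hclosed (fun c => c * star c)
    (continuous_id.mul continuous_star) _ (fun ε hε => ?_)
  set ε' := min ε 1 with hε'def
  have hε' : 0 < ε' := lt_min hε one_pos
  have hε'le : ε' ≤ ε := min_le_left _ _
  have hε'1 : ε' ≤ 1 := min_le_right _ _
  have hn1 : (1:ℝ) ≤ (n:ℝ)+1 := by have : (0:ℝ) ≤ (n:ℝ) := Nat.cast_nonneg n; linarith
  set t : ℝ := Real.sqrt (4*((n:ℝ)+1)/ε') + 1 with ht
  have ht1 : 1 ≤ t := le_add_of_nonneg_left (Real.sqrt_nonneg _)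
  have ht0 : 0 < t := lt_of_lt_of_le one_pos ht1
  have ht2 : (0:ℝ) < t^2 := pow_pos ht0 2
  have htsq : 4*((n:ℝ)+1)/ε' ≤ t^2 := by
    have h := Real.sq_sqrt (show (0:ℝ) ≤ 4*((n:ℝ)+1)/ε' by positivity)
    nlinarith [Real.sqrt_nonneg (4*((n:ℝ)+1)/ε')]
  have h4 : 4*((n:ℝ)+1) ≤ ε' * t^2 := by
    rw [div_le_iff₀ hε'] at htsq; linarith
  have hkey : ((n:ℝ)+1) * (t^2)⁻¹ ≤ ε'/4 := by
    rw [← div_eq_mul_inv, div_le_div_iff₀ ht2 (by norm_num)]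
    linarith
  set δ : ℝ := ε' / (8*((n:ℝ)+1)^5*t^2) with hδdef
  have hδ : 0 < δ := by
    refine div_pos hε' ?_
    positivity
  set τ : ℂ := ((t:ℝ) : ℂ) with hτ
  have hτ0 : τ ≠ 0 := Complex.ofReal_ne_zero.mpr (ne_of_gt ht0)
  have hττ : τ^2 = ((t^2 : ℝ) : ℂ) := by push_cast; ring
  have hτ20 : τ^2 ≠ 0 := pow_ne_zero 2 hτ0
  have hinvc : (((t^2)⁻¹ : ℝ) : ℂ) = (τ^2)⁻¹ := by rw [Complex.ofReal_inv, hττ]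
  set d : Fin n → ℂ := fun j => if j = i then (((t^2)⁻¹ : ℝ) : ℂ) else 1 with hd
  have hD : (Matrix.diagonal d).PosDef := by
    refine Matrix.PosDef.diagonal fun j => ?_
    by_cases hj : j = i
    · simp only [hd, if_pos hj]
      exact Complex.zero_lt_real.mpr (by positivity)
    · simp only [hd, if_neg hj]
      exact zero_lt_one
  obtain ⟨a, a', haA, ha'A, hm1, hm2, hdist⟩ :=
    approx A hlog (Matrix.diagonal d) hD δ hδ
  set X := star a * a with hX
  set w : Matrix (Fin n) (Fin n) ℂ := a' * star a' with hw
  have hXw : X * w = 1 := by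
    calc X * w = star a * ((a * a') * star a') := by
          rw [hX, hw, mul_assoc, ← mul_assoc a a' (star a')]
      _ = star a * star a' := by rw [hm1, one_mul]
      _ = star (a' * a) := (Matrix.star_mul a' a).symm
      _ = 1 := by rw [hm2, star_one]
  have hwX : w * X = 1 := by
    calc w * X = a' * ((star a' * star a) * a) := by
          rw [hX, hw, mul_assoc, ← mul_assoc (star a') (star a) a]
      _ = a' * (star (a * a') * a) := by rw [← Matrix.star_mul]
      _ = a' * a := by rw [hm1, star_one, one_mul]
      _ = 1 := hm2
  set p : Fin n → ℂ := fun j => if j = i then τ else 1 with hp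
  set q : Fin n → ℂ := fun j => if j = i then τ⁻¹ else 1 with hq
  set P : Matrix (Fin n) (Fin n) ℂ := Matrix.diagonal p with hP
  set Q : Matrix (Fin n) (Fin n) ℂ := Matrix.diagonal q with hQ
  have hPQ : P * Q = 1 := by
    rw [hP, hQ, Matrix.diagonal_mul_diagonal]
    refine diagonal_eq_one _ fun j => ?_
    by_cases hj : j = i
    · simp only [hp, hq, if_pos hj]; exact mul_inv_cancel₀ hτ0
    · simp [hp, hq, hj]
  have hQP : Q * P = 1 := by
    rw [hP, hQ, Matrix.diagonal_mul_diagonal]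
    refine diagonal_eq_one _ fun j => ?_
    by_cases hj : j = i
    · simp only [hp, hq, if_pos hj]; exact inv_mul_cancel₀ hτ0
    · simp [hp, hq, hj]
  have hPDP : P * Matrix.diagonal d * P = 1 := by
    rw [hP, Matrix.diagonal_mul_diagonal, Matrix.diagonal_mul_diagonal]
    refine diagonal_eq_one _ fun j => ?_
    by_cases hj : j = i
    · simp only [hp, hd, if_pos hj, hinvc]
      field_simp
    · simp [hp, hd, hj]
  set Y : Matrix (Fin n) (Fin n) ℂ := P * X * P with hY
  set v : Matrix (Fin n) (Fin n) ℂ := Q * w * Q with hv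
  have hYv : Y * v = 1 := by
    calc Y * v = P * X * ((P * Q) * (w * Q)) := by
          rw [hY, hv]; simp only [mul_assoc]
      _ = P * X * (w * Q) := by rw [hPQ, one_mul]
      _ = P * ((X * w) * Q) := by simp only [mul_assoc]
      _ = P * Q := by rw [hXw, one_mul]
      _ = 1 := hPQ
  have h1Y : 1 - Y = -(P * (X - Matrix.diagonal d) * P) := by
    have h : P * (X - Matrix.diagonal d) * P = Y - 1 := by
      rw [mul_sub, sub_mul, hPDP, hY]
    rw [h, neg_sub]
  have hnormP : ‖P‖ ≤ ((n:ℝ)+1) * t := by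
    rw [hP]
    refine norm_diagonal_le _ _ (le_of_lt ht0) fun j => ?_
    by_cases hj : j = i
    · simp only [hp, if_pos hj, hτ, Complex.norm_real, Real.norm_eq_abs, abs_of_pos ht0]; exact le_refl t
    · simp only [hp, if_neg hj]; simpa using ht1
  have hY' : ‖1 - Y‖ ≤ (((n:ℝ)+1)*t) * δ * (((n:ℝ)+1)*t) := by
    rw [h1Y, norm_neg]
    exact norm_triple _ _ _ _ _ hnormP (le_of_lt hdist) hnormP (le_of_lt hδ)
  have heq1 : (((n:ℝ)+1)*t) * δ * (((n:ℝ)+1)*t) = ε' / (8*((n:ℝ)+1)^3) := by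
    rw [hδdef]
    field_simp
  have hn3 : (1:ℝ) ≤ ((n:ℝ)+1)^3 := one_le_pow₀ hn1
  have h12 : ‖1 - Y‖ ≤ 1/2 := by
    rw [heq1] at hY'
    have : ε' / (8*((n:ℝ)+1)^3) ≤ 1/2 := by
      rw [div_le_div_iff₀ (by positivity) (by norm_num)]
      nlinarith
    linarith
  have hv1 : ‖v - 1‖ ≤ ε' / (4*((n:ℝ)+1)^2) := by
    have h := inv_near_one Y v hYv h12
    rw [heq1] at hY'
    have h2 : 2*((n:ℝ)+1)*‖1 - Y‖ ≤ 2*((n:ℝ)+1)*(ε' / (8*((n:ℝ)+1)^3)) := by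
      refine mul_le_mul_of_nonneg_left hY' ?_
      positivity
    have heq2 : 2*((n:ℝ)+1)*(ε' / (8*((n:ℝ)+1)^3)) = ε' / (4*((n:ℝ)+1)^2) := by
      field_simp
      ring
    linarith
  have hwPvP : w = P * v * P := by
    calc w = (P * Q) * w * (Q * P) := by rw [hPQ, hQP, one_mul, mul_one]
      _ = P * (Q * w * Q) * P := by simp only [mul_assoc]
      _ = P * v * P := by rw [hv]
  set c : Matrix (Fin n) (Fin n) ℂ := τ⁻¹ • a' with hc
  have hcA : c ∈ A := A.smul_mem ha'A _
  have hcc : c * star c = (τ^2)⁻¹ • w := by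
    rw [hc, star_smul, smul_mul_assoc, mul_smul_comm, smul_smul, hw]
    congr 1
    rw [star_inv₀, show star τ = τ by simp [hτ, Complex.conj_ofReal], ← mul_inv, sq]
  have hsplit : P * (v - 1) * P = w - P * P := by
    rw [mul_sub, sub_mul, mul_one, ← hwPvP]
  have hdec : c * star c - single i i (1:ℂ) =
      (τ^2)⁻¹ • (P * (v - 1) * P) +
      ((τ^2)⁻¹ • (P * P) - single i i (1:ℂ)) := by
    rw [hcc, hsplit, smul_sub]; abel
  have habs : ‖(τ^2)⁻¹‖ = (t^2)⁻¹ := by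
    rw [norm_inv, hττ, Complex.norm_real, Real.norm_eq_abs, abs_of_pos ht2]
  have hτ2 : ‖(τ^2)⁻¹‖ = (t^2)⁻¹ := habs
  have hterm1 : ‖(τ^2)⁻¹ • (P * (v - 1) * P)‖ ≤ ε'/4 := by
    rw [norm_smul, hτ2]
    have hb : ‖P * (v - 1) * P‖ ≤ (((n:ℝ)+1)*t) * (ε' / (4*((n:ℝ)+1)^2)) * (((n:ℝ)+1)*t) :=
      norm_triple _ _ _ _ _ hnormP hv1 hnormP (by positivity)
    have heq3 : (t^2)⁻¹ * ((((n:ℝ)+1)*t) * (ε' / (4*((n:ℝ)+1)^2)) * (((n:ℝ)+1)*t)) = ε'/4 := by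
      field_simp
    calc (t^2)⁻¹ * ‖P * (v - 1) * P‖
        ≤ (t^2)⁻¹ * ((((n:ℝ)+1)*t) * (ε' / (4*((n:ℝ)+1)^2)) * (((n:ℝ)+1)*t)) :=
          mul_le_mul_of_nonneg_left hb (by positivity)
      _ = ε'/4 := heq3
  have hterm2 : ‖(τ^2)⁻¹ • (P * P) - single i i (1:ℂ)‖ ≤ ε'/4 := by
    have heq : (τ^2)⁻¹ • (P * P) - single i i (1:ℂ) =
        Matrix.diagonal (fun j => if j = i then 0 else (τ^2)⁻¹) := by
      rw [stdBasis_eq_diagonal, hP, Matrix.diagonal_mul_diagonal]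
      ext r s
      by_cases hrs : r = s
      · subst hrs
        by_cases hri : r = i
        · simp only [Matrix.sub_apply, Matrix.smul_apply, Matrix.diagonal_apply_eq, hp,
            if_pos hri, smul_eq_mul]
          rw [show τ * τ = τ^2 by ring, inv_mul_cancel₀ hτ20]
          simp
        · simp [Matrix.sub_apply, Matrix.smul_apply, Matrix.diagonal_apply_eq, hp, hri,
            smul_eq_mul]
      · simp [Matrix.sub_apply, Matrix.smul_apply, Matrix.diagonal_apply_ne, hrs]
    rw [heq]
    calc ‖Matrix.diagonal (fun j => if j = i then 0 else (τ^2)⁻¹)‖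
        ≤ ((n:ℝ)+1) * (t^2)⁻¹ := by
          refine norm_diagonal_le _ _ (by positivity) fun j => ?_
          by_cases hj : j = i
          · simp [hj]; positivity
          · simp only [if_neg hj]; rw [habs]
      _ ≤ ε'/4 := hkey
  have hclose : ‖c * star c - single i i (1:ℂ)‖ < ε' := by
    rw [hdec]
    calc ‖_ + _‖ ≤ _ + _ := norm_add_le _ _
      _ < ε' := by linarith
  refine ⟨c, hcA, ?_, lt_of_lt_of_le hclose hε'le⟩
  refine norm_le_row c ?_
  calc ‖c * star c‖ ≤ ‖c * star c - single i i (1:ℂ)‖ + ‖single i i (1:ℂ)‖ := by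
        simpa using norm_add_le (c * star c - single i i (1:ℂ)) (single i i (1:ℂ))
    _ ≤ (n:ℝ)+2 := by have := norm_E_le (n := n) i; linarith

theorem row_support (c : Matrix (Fin n) (Fin n) ℂ) (i : Fin n)
    (h : c * star c = single i i (1:ℂ)) :
    (∀ a, a ≠ i → ∀ k, c a k = 0) ∧ (fun k => c i k) ≠ 0 := by
  constructor
  · intro a ha k
    have h1 : (c * star c) a a = 0 := by
      rw [h]
      exact Matrix.single_apply_of_ne (i := i) (j := i) (i' := a) (j' := a) (c := (1:ℂ))
        (by rintro ⟨h1, -⟩; exact ha h1.symm)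
    rw [diag_mul_star c a] at h1
    have h2 : ((∑ k', Complex.normSq (c a k') : ℝ) : ℂ) = 0 := by push_cast; exact h1
    have h3 : (∑ k', Complex.normSq (c a k')) = 0 := Complex.ofReal_eq_zero.mp h2
    have h4 := (Finset.sum_eq_zero_iff_of_nonneg
      (fun k' _ => Complex.normSq_nonneg (c a k'))).mp h3 k (Finset.mem_univ k)
    exact Complex.normSq_eq_zero.mp h4
  · intro h0
    have h1 : (c * star c) i i = 1 := by rw [h]; exact Matrix.single_apply_same i i 1
    rw [diag_mul_star c i] at h1
    rw [Finset.sum_eq_zero (fun k _ => by rw [congrFun h0 k]; simp)] at h1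
    exact one_ne_zero h1.symm

theorem col_support (c : Matrix (Fin n) (Fin n) ℂ) (j : Fin n)
    (h : star c * c = single j j (1:ℂ)) :
    (∀ b, b ≠ j → ∀ k, c k b = 0) ∧ (fun k => c k j) ≠ 0 := by
  constructor
  · intro b hb k
    have h1 : (star c * c) b b = 0 := by
      rw [h]
      exact Matrix.single_apply_of_ne (i := j) (j := j) (i' := b) (j' := b) (c := (1:ℂ))
        (by rintro ⟨h1, -⟩; exact hb h1.symm)
    rw [diag_star_mul c b] at h1
    have h2 : ((∑ k', Complex.normSq (c k' b) : ℝ) : ℂ) = 0 := by push_cast; exact h1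
    have h3 : (∑ k', Complex.normSq (c k' b)) = 0 := Complex.ofReal_eq_zero.mp h2
    have h4 := (Finset.sum_eq_zero_iff_of_nonneg
      (fun k' _ => Complex.normSq_nonneg (c k' b))).mp h3 k (Finset.mem_univ k)
    exact Complex.normSq_eq_zero.mp h4
  · intro h0
    have h1 : (star c * c) j j = 1 := by rw [h]; exact Matrix.single_apply_same j j 1
    rw [diag_star_mul c j] at h1
    rw [Finset.sum_eq_zero (fun k _ => by rw [congrFun h0 k]; simp)] at h1
    exact one_ne_zero h1.symm

theorem row_repr (c : Matrix (Fin n) (Fin n) ℂ) (i : Fin n)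
    (hz : ∀ a, a ≠ i → ∀ k, c a k = 0) :
    (∑ k, c i k • single i k (1:ℂ)) = c := by
  ext a b
  rw [Matrix.sum_apply]
  by_cases ha : a = i
  · subst ha
    simp [Matrix.smul_apply, smul_eq_mul, Matrix.single, Finset.sum_ite_eq']
  · rw [hz a ha b, Finset.sum_eq_zero]
    intro k _
    simp only [Matrix.smul_apply, smul_eq_mul, Matrix.single, Matrix.of_apply]
    rw [if_neg (fun hh => ha hh.1.symm), mul_zero]

theorem col_repr (c : Matrix (Fin n) (Fin n) ℂ) (j : Fin n)
    (hz : ∀ b, b ≠ j → ∀ k, c k b = 0) :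
    (∑ k, c k j • single k j (1:ℂ)) = c := by
  ext a b
  rw [Matrix.sum_apply]
  by_cases hb : b = j
  · subst hb
    simp [Matrix.smul_apply, smul_eq_mul, Matrix.single, Finset.sum_ite_eq]
  · rw [hz b hb a, Finset.sum_eq_zero]
    intro k _
    simp only [Matrix.smul_apply, smul_eq_mul, Matrix.single, Matrix.of_apply]
    rw [if_neg (fun hh => hb hh.2.symm), mul_zero]

end LogmodAux

/-- If `A` is logmodular in `Mₙ(ℂ)` then there are scalars `α i k`, `β k j` such that every
row of `α` and every column of `β` is non-zero, and for each `i` the matrix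
`∑ k, α i k • E i k` (supported on the `i`-th row) and for each `j` the matrix
`∑ k, β k j • E k j` (supported on the `j`-th column) belong to `A`. -/
theorem logmodular_row_and_column_elements
    {n : ℕ} (A : Subalgebra ℂ (Matrix (Fin n) (Fin n) ℂ))
    (hclosed : IsClosed (A : Set (Matrix (Fin n) (Fin n) ℂ)))
    (hlog : IsLogmodular A) :
    ∃ α β : Matrix (Fin n) (Fin n) ℂ,
      (∀ i : Fin n, (fun k => α i k) ≠ 0) ∧
      (∀ j : Fin n, (fun k => β k j) ≠ 0) ∧
      (∀ i : Fin n, (∑ k : Fin n, α i k • Matrix.single i k (1 : ℂ)) ∈ A) ∧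
      (∀ j : Fin n, (∑ k : Fin n, β k j • Matrix.single k j (1 : ℂ)) ∈ A) := by
  classical
  choose r hrA hr using fun i => LogmodAux.row_exists A hclosed hlog i
  choose s hsA hs using fun j => LogmodAux.col_exists A hclosed hlog j
  refine ⟨Matrix.of (fun i k => r i i k), Matrix.of (fun k j => s j k j), ?_, ?_, ?_, ?_⟩
  · intro i h0
    exact (LogmodAux.row_support (r i) i (hr i)).2 h0
  · intro j h0
    exact (LogmodAux.col_support (s j) j (hs j)).2 h0
  · intro i
    have hrepr := LogmodAux.row_repr (r i) i (LogmodAux.row_support (r i) i (hr i)).1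
    have : (∑ k : Fin n, (Matrix.of (fun i k => r i i k) : Matrix (Fin n) (Fin n) ℂ) i k •
        Matrix.single i k (1 : ℂ)) = r i := hrepr
    rw [this]
    exact hrA i
  · intro j
    have hrepr := LogmodAux.col_repr (s j) j (LogmodAux.col_support (s j) j (hs j)).1
    have : (∑ k : Fin n, (Matrix.of (fun k j => s j k j) : Matrix (Fin n) (Fin n) ℂ) k j •
        Matrix.single k j (1 : ℂ)) = s j := hrepr
    rw [this]
    exact hsA j
end

section
/- Let 𝒜 ⊆ M_n(ℂ) be a logmodular subalgebra. Then for every positive semidefinite matrix b ∈ M_n(ℂ) there exist a, c ∈ 𝒜 such that b = a*a and b = c c*. -/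
open scoped ComplexOrder

attribute [local instance] Matrix.normedAddCommGroup Matrix.normedSpace

namespace LogmodAux

variable {n : ℕ}

local notation "M" => Matrix (Fin n) (Fin n) ℂ

lemma entry_sq_le_left (a : M) (i j : Fin n) : ‖a i j‖ ^ 2 ≤ ‖star a * a‖ := by
  have h1 : (star a * a) j j = ((∑ k, ‖a k j‖ ^ 2 : ℝ) : ℂ) := by
    rw [Matrix.mul_apply]
    push_cast
    refine Finset.sum_congr rfl fun k _ => ?_
    rw [Matrix.star_apply, Complex.star_def, mul_comm, Complex.mul_conj']
  have h2 : ‖a i j‖ ^ 2 ≤ ∑ k, ‖a k j‖ ^ 2 :=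
    Finset.single_le_sum (fun k _ => sq_nonneg ‖a k j‖) (Finset.mem_univ i)
  have h3 : ‖(star a * a) j j‖ = ∑ k, ‖a k j‖ ^ 2 := by
    rw [h1, Complex.norm_real, Real.norm_of_nonneg]
    exact Finset.sum_nonneg fun k _ => sq_nonneg _
  calc ‖a i j‖ ^ 2 ≤ ∑ k, ‖a k j‖ ^ 2 := h2
    _ = ‖(star a * a) j j‖ := h3.symm
    _ ≤ ‖star a * a‖ := Matrix.norm_entry_le_entrywise_sup_norm _

lemma entry_sq_le_right (c : M) (i j : Fin n) : ‖c i j‖ ^ 2 ≤ ‖c * star c‖ := by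
  have h1 : (c * star c) i i = ((∑ k, ‖c i k‖ ^ 2 : ℝ) : ℂ) := by
    rw [Matrix.mul_apply]
    push_cast
    refine Finset.sum_congr rfl fun k _ => ?_
    rw [Matrix.star_apply, Complex.star_def, Complex.mul_conj']
  have h2 : ‖c i j‖ ^ 2 ≤ ∑ k, ‖c i k‖ ^ 2 :=
    Finset.single_le_sum (fun k _ => sq_nonneg ‖c i k‖) (Finset.mem_univ j)
  have h3 : ‖(c * star c) i i‖ = ∑ k, ‖c i k‖ ^ 2 := by
    rw [h1, Complex.norm_real, Real.norm_of_nonneg]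
    exact Finset.sum_nonneg fun k _ => sq_nonneg _
  calc ‖c i j‖ ^ 2 ≤ ∑ k, ‖c i k‖ ^ 2 := h2
    _ = ‖(c * star c) i i‖ := h3.symm
    _ ≤ ‖c * star c‖ := Matrix.norm_entry_le_entrywise_sup_norm _

/-- Extraction of a convergent subsequence from a norm-bounded-factor sequence shows
that factorization sets are closed. -/
lemma closed_aux (A : Subalgebra ℂ M) (hclosed : IsClosed (A : Set M))
    (f : M → M) (hf : Continuous f)
    (hbd : ∀ (a : M) (i j : Fin n), ‖a i j‖ ^ 2 ≤ ‖f a‖) :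
    IsClosed {x : M | ∃ a ∈ A, x = f a} := by
  haveI : FirstCountableTopology M := inferInstanceAs (FirstCountableTopology (Fin n → Fin n → ℂ))
  haveI : SequentialSpace M := inferInstanceAs (SequentialSpace (Fin n → Fin n → ℂ))
  rw [← isSeqClosed_iff_isClosed]
  intro x L hmem hlim
  choose a haA hxa using hmem
  obtain ⟨C, hC⟩ : ∃ C : ℝ, ∀ k, ‖x k‖ ≤ C := by
    obtain ⟨C, hC⟩ := (hlim.norm).bddAbove_range
    exact ⟨C, fun k => hC ⟨k, rfl⟩⟩
  have haK : ∀ k, a k ∈ Metric.closedBall (0 : M) (Real.sqrt C) ∩ (A : Set M) := by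
    intro k
    refine ⟨?_, haA k⟩
    rw [Metric.mem_closedBall, dist_zero_right]
    rw [Matrix.norm_le_iff (Real.sqrt_nonneg C)]
    intro i j
    have h1 : ‖a k i j‖ ^ 2 ≤ C := by
      calc ‖a k i j‖ ^ 2 ≤ ‖f (a k)‖ := hbd (a k) i j
        _ = ‖x k‖ := by rw [hxa k]
        _ ≤ C := hC k
    calc ‖a k i j‖ = Real.sqrt (‖a k i j‖ ^ 2) := (Real.sqrt_sq (norm_nonneg _)).symm
      _ ≤ Real.sqrt C := Real.sqrt_le_sqrt h1
  have hKcomp : IsCompact (Metric.closedBall (0 : M) (Real.sqrt C) ∩ (A : Set M)) :=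
    (isCompact_closedBall _ _).inter_right hclosed
  obtain ⟨l, hl, φ, hφ, hlim'⟩ := hKcomp.tendsto_subseq haK
  refine ⟨l, hl.2, ?_⟩
  have h1 : Filter.Tendsto (fun k => f (a (φ k))) Filter.atTop (nhds (f l)) :=
    (hf.tendsto l).comp hlim'
  have h2 : Filter.Tendsto (fun k => x (φ k)) Filter.atTop (nhds L) :=
    hlim.comp hφ.tendsto_atTop
  have h3 : (fun k => x (φ k)) = fun k => f (a (φ k)) := funext fun k => hxa (φ k)
  exact tendsto_nhds_unique h2 (h3 ▸ h1)

lemma isClosed_left (A : Subalgebra ℂ M) (hclosed : IsClosed (A : Set M)) :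
    IsClosed {x : M | ∃ a ∈ A, x = star a * a} :=
  closed_aux A hclosed (fun a => star a * a) (continuous_star.mul continuous_id)
    entry_sq_le_left

lemma isClosed_right (A : Subalgebra ℂ M) (hclosed : IsClosed (A : Set M)) :
    IsClosed {x : M | ∃ c ∈ A, x = c * star c} :=
  closed_aux A hclosed (fun c => c * star c) (continuous_id.mul continuous_star)
    entry_sq_le_right

/-- Every positive definite matrix lies in the closed factorization set `{a* a}`. -/
lemma posdef_mem_left {A : Subalgebra ℂ M} (hclosed : IsClosed (A : Set M))
    (hlog : IsLogmodular A) {b : M} (hb : b.PosDef) :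
    b ∈ {x : M | ∃ a ∈ A, x = star a * a} := by
  have hsub : {x : M | ∃ a ∈ A, (∃ a' ∈ A, a * a' = 1 ∧ a' * a = 1) ∧ x = star a * a}
      ⊆ {x : M | ∃ a ∈ A, x = star a * a} := by
    rintro x ⟨a, ha, -, hx⟩
    exact ⟨a, ha, hx⟩
  exact (isClosed_left A hclosed).closure_subset
    ((closure_mono hsub) (hlog b hb))

/-- Every positive definite matrix lies in the closed factorization set `{c c*}`. -/
lemma posdef_mem_right {A : Subalgebra ℂ M} (hclosed : IsClosed (A : Set M))
    (hlog : IsLogmodular A) {b : M} (hb : b.PosDef) :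
    b ∈ {x : M | ∃ c ∈ A, x = c * star c} := by
  have hbinv : (b⁻¹).PosDef := hb.inv
  haveI : FrechetUrysohnSpace M := inferInstanceAs (FrechetUrysohnSpace (Fin n → Fin n → ℂ))
  obtain ⟨x, hx, hlim⟩ := mem_closure_iff_seq_limit.mp (hlog b⁻¹ hbinv)
  -- the matrix inverse is continuous at `b⁻¹`
  have hcont : ContinuousAt Inv.inv (b⁻¹ : M) := by
    apply continuousAt_matrix_inv
    rw [Ring.inverse_eq_inv']
    exact continuousAt_inv₀ hbinv.det_pos.ne'
  have hlim2 : Filter.Tendsto (fun k => (x k)⁻¹) Filter.atTop (nhds ((b⁻¹)⁻¹)) :=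
    hcont.tendsto.comp hlim
  rw [Matrix.nonsing_inv_nonsing_inv b hb.det_pos.ne'.isUnit] at hlim2
  have hmem : ∀ k, (x k)⁻¹ ∈ {x : M | ∃ c ∈ A, x = c * star c} := by
    intro k
    obtain ⟨a, haA, ⟨a', ha'A, h1, h2⟩, hxk⟩ := hx k
    have key : x k * (a' * star a') = 1 := by
      rw [hxk, ← mul_assoc, mul_assoc (star a) a a', h1, mul_one, ← star_mul, h2, star_one]
    exact ⟨a', ha'A, (Matrix.inv_eq_right_inv key).symm ▸ rfl⟩
  exact (isClosed_right A hclosed).closure_subset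
    (mem_closure_of_tendsto hlim2 (Filter.Eventually.of_forall hmem))

lemma posDef_smul_one {ε : ℝ} (hε : 0 < ε) : ((ε : ℂ) • (1 : M)).PosDef := by
  rw [Matrix.smul_one_eq_diagonal]
  exact Matrix.posDef_diagonal_iff.mpr fun _ => by exact_mod_cast hε

end LogmodAux

/-- If `A` is logmodular in `Mₙ(ℂ)`, then every positive semidefinite matrix `b` factors as
`b = a* a` and as `b = c c*` with `a, c ∈ A`. -/
theorem logmodular_posSemidef_factorization
    {n : ℕ} (A : Subalgebra ℂ (Matrix (Fin n) (Fin n) ℂ))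
    (hclosed : IsClosed (A : Set (Matrix (Fin n) (Fin n) ℂ)))
    (hlog : IsLogmodular A) :
    ∀ b : Matrix (Fin n) (Fin n) ℂ, b.PosSemidef →
      ∃ a ∈ A, ∃ c ∈ A, b = star a * a ∧ b = c * star c := by
  intro b hb
  -- approximate `b` by the positive definite matrices `b + (1/(k+1)) • 1`
  set g : ℕ → Matrix (Fin n) (Fin n) ℂ :=
    fun k => b + ((1 / (k + 1) : ℝ) : ℂ) • 1 with hg
  have hgposdef : ∀ k, (g k).PosDef := fun k =>
    Matrix.PosDef.posSemidef_add hb (LogmodAux.posDef_smul_one (by positivity))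
  have htends : Filter.Tendsto g Filter.atTop (nhds b) := by
    have t1 : Filter.Tendsto (fun k : ℕ => ((1 / (k + 1) : ℝ) : ℂ))
        Filter.atTop (nhds 0) := by
      have := (Complex.continuous_ofReal.tendsto 0).comp
        tendsto_one_div_add_atTop_nhds_zero_nat
      simpa [Function.comp_def, one_div] using this
    have t2 := (tendsto_const_nhds (x := b) (f := Filter.atTop (α := ℕ))).add
      (t1.smul_const (1 : Matrix (Fin n) (Fin n) ℂ))
    simpa [hg] using t2
  have hL : b ∈ {x : Matrix (Fin n) (Fin n) ℂ | ∃ a ∈ A, x = star a * a} :=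
    (LogmodAux.isClosed_left A hclosed).closure_subset
      (mem_closure_of_tendsto htends (Filter.Eventually.of_forall fun k =>
        LogmodAux.posdef_mem_left hclosed hlog (hgposdef k)))
  have hR : b ∈ {x : Matrix (Fin n) (Fin n) ℂ | ∃ c ∈ A, x = c * star c} :=
    (LogmodAux.isClosed_right A hclosed).closure_subset
      (mem_closure_of_tendsto htends (Filter.Eventually.of_forall fun k =>
        LogmodAux.posdef_mem_right hclosed hlog (hgposdef k)))
  obtain ⟨a, haA, hba⟩ := hL
  obtain ⟨c, hcA, hbc⟩ := hR
  exact ⟨a, haA, c, hcA, hba, hbc⟩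
end

section
/- Fix k ∈ {1,...,n} and let A ⊆ P_{\{1,...,k\}} M_n(ℂ) be a set of matrices (each supported on the first k rows) such that E_{m,m} ∈ A for every m ∈ {1,...,k}, and such that for every nonempty subset {i_1,...,i_m} ⊆ {1,...,k} one has P_{\{i_1,...,i_m\}} A (1_n − P_{\{i_1,...,i_m\}}) ≠ {0}, i.e. there exists a ∈ A and indices i ∈ {i_1,...,i_m}, j ∉ {i_1,...,i_m} with a(i,j) ≠ 0. Then for every t ∈ {1,...,k} the subalgebra of M_n(ℂ) generated by A contains an element S such that S(t,l) ≠ 0 for some l ∈ {k+1,...,n}. -/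
lemma aux_mul_std_mul {n : ℕ} (S a : Matrix (Fin n) (Fin n) ℂ) (i t j : Fin n) :
    (S * (Matrix.single i i (1 : ℂ) * a)) t j = S t i * a i j := by
  classical
  have h1 : (Matrix.single i i (1 : ℂ) * a) = fun m p => if m = i then a i p else 0 := by
    ext m p
    simp [Matrix.mul_apply, Matrix.single, ite_and, eq_comm]
  rw [h1]
  show ∑ x, S t x * (if x = i then a i j else 0) = _
  simp

/-- Fix `k ∈ {1, …, n}` and let `A` be a set of matrices supported on the first `k` rows,
containing the matrix units `E m m` for all `m < k`, and such that for every nonempty subset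
`J ⊆ {1, …, k}` there are `a ∈ A`, `i ∈ J` and `j ∉ J` with `a i j ≠ 0`
(i.e. `P_J A (1 − P_J) ≠ {0}`). Then for every `t < k` the subalgebra of `Mₙ(ℂ)` generated
by `A` contains an element `S` with `S t l ≠ 0` for some `l ≥ k` (i.e. `l ∈ {k+1, …, n}`). -/
theorem generated_algebra_exits_first_block
    {n k : ℕ} (hk : 1 ≤ k) (hkn : k ≤ n)
    (A : Set (Matrix (Fin n) (Fin n) ℂ))
    (hsupp : ∀ a ∈ A, ∀ i j : Fin n, k ≤ (i : ℕ) → a i j = 0)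
    (hdiag : ∀ m : Fin n, (m : ℕ) < k → Matrix.single m m (1 : ℂ) ∈ A)
    (hexit : ∀ J : Finset (Fin n), J.Nonempty → (∀ i ∈ J, (i : ℕ) < k) →
      ∃ a ∈ A, ∃ i ∈ J, ∃ j ∉ J, a i j ≠ 0) :
    ∀ t : Fin n, (t : ℕ) < k →
      ∃ S ∈ NonUnitalAlgebra.adjoin ℂ A, ∃ l : Fin n, k ≤ (l : ℕ) ∧ S t l ≠ 0 := by
  intro t ht
  by_contra hno
  push_neg at hno
  classical
  set J : Finset (Fin n) := Finset.univ.filter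
    (fun j => ∃ S ∈ NonUnitalAlgebra.adjoin ℂ A, S t j ≠ 0) with hJ
  have hJmem : ∀ j : Fin n, j ∈ J ↔ ∃ S ∈ NonUnitalAlgebra.adjoin ℂ A, S t j ≠ 0 := by
    intro j; simp [hJ]
  have hJlt : ∀ j ∈ J, (j : ℕ) < k := by
    intro j hj
    obtain ⟨S, hS, hne⟩ := (hJmem j).1 hj
    by_contra h
    exact hne (hno S hS j (le_of_not_gt h))
  have htJ : t ∈ J := by
    rw [hJmem]
    refine ⟨_, NonUnitalAlgebra.subset_adjoin ℂ (hdiag t ht), ?_⟩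
    simp [Matrix.single]
  obtain ⟨a, haA, i, hiJ, j, hjJ, hij⟩ := hexit J ⟨t, htJ⟩ hJlt
  have hik : (i : ℕ) < k := hJlt i hiJ
  obtain ⟨S, hS, hSti⟩ := (hJmem i).1 hiJ
  have hmem : S * (Matrix.single i i (1 : ℂ) * a) ∈ NonUnitalAlgebra.adjoin ℂ A :=
    mul_mem hS (mul_mem (NonUnitalAlgebra.subset_adjoin ℂ (hdiag i hik))
      (NonUnitalAlgebra.subset_adjoin ℂ haA))
  have : j ∈ J := by
    rw [hJmem]
    exact ⟨_, hmem, by rw [aux_mul_std_mul]; exact mul_ne_zero hSti hij⟩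
  exact hjJ this
end

section
/- Let 𝒜 ⊆ M_n(ℂ) be a logmodular subalgebra and let P ∈ 𝒜 be a diagonal projection of the form P = P_J for some subset J ⊆ {1,...,n}, such that Q a (1_n − Q) = 0 for all a ∈ 𝒜, where Q = 1_n − P (equivalently, (1_n−P) 𝒜 P = {0}). Then ℬ = P 𝒜 P is logmodular in the corner C*-algebra 𝒞 = P M_n(ℂ) P: every positive semidefinite element a ∈ 𝒞 can be written as a = b*b with b ∈ ℬ. -/
open scoped ComplexOrder

section Aux

attribute [local instance] Matrix.normedAddCommGroup Matrix.normedSpace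

/-- In a closed logmodular subalgebra, every positive semidefinite matrix factors
exactly as `star a * a` with `a ∈ A`. -/
theorem IsLogmodular.exists_star_mul_self
    {n : ℕ} (A : Subalgebra ℂ (Matrix (Fin n) (Fin n) ℂ))
    (hclosed : IsClosed (A : Set (Matrix (Fin n) (Fin n) ℂ)))
    (hlog : IsLogmodular A)
    (b : Matrix (Fin n) (Fin n) ℂ) (hb : b.PosSemidef) :
    ∃ a ∈ A, b = star a * a := by
  -- the perturbations
  set ε : ℕ → ℝ := fun k => ((k : ℝ) + 1)⁻¹ with hε
  have hεpos : ∀ k, 0 < ε k := fun k => by positivity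
  have hεle : ∀ k, ε k ≤ 1 := by
    intro k
    rw [hε]
    simp only [← one_div]
    exact div_le_one_of_le₀ (by linarith [Nat.cast_nonneg (α := ℝ) k]) (by positivity)
  have hεtend : Filter.Tendsto ε Filter.atTop (nhds 0) := by
    simpa [hε, one_div] using tendsto_one_div_add_atTop_nhds_zero_nat (𝕜 := ℝ)
  set bk : ℕ → Matrix (Fin n) (Fin n) ℂ := fun k => b + ((ε k : ℂ)) • 1 with hbk
  have hbkpd : ∀ k, (bk k).PosDef := by
    intro k
    have h1 : ((ε k : ℂ)) • (1 : Matrix (Fin n) (Fin n) ℂ) =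
        Matrix.diagonal (fun _ => (ε k : ℂ)) := Matrix.smul_one_eq_diagonal _
    rw [hbk]
    simp only []
    rw [h1]
    exact Matrix.PosDef.posSemidef_add hb (Matrix.PosDef.diagonal fun i => by
      simpa using Complex.zero_lt_real.mpr (hεpos k))
  -- approximate factorizations
  have H : ∀ k, ∃ a, a ∈ A ∧ dist (bk k) (star a * a) < ε k := by
    intro k
    obtain ⟨x, hxS, hxd⟩ :=
      Metric.mem_closure_iff.mp (hlog (bk k) (hbkpd k)) (ε k) (hεpos k)
    obtain ⟨a, haA, -, rfl⟩ := hxS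
    exact ⟨a, haA, hxd⟩
  choose a haA had using H
  -- the sequence of exact squares converges to b
  have hdistb : ∀ k, dist (star (a k) * a k) b ≤ ε k * (1 + ‖(1 : Matrix (Fin n) (Fin n) ℂ)‖) := by
    intro k
    have h1 : dist (bk k) b = ε k * ‖(1 : Matrix (Fin n) (Fin n) ℂ)‖ := by
      rw [hbk]
      simp only [dist_eq_norm, add_sub_cancel_left, norm_smul]
      simp [Complex.norm_real, abs_of_pos (hεpos k)]
    calc dist (star (a k) * a k) b ≤ dist (star (a k) * a k) (bk k) + dist (bk k) b :=
          dist_triangle _ _ _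
      _ ≤ ε k + ε k * ‖(1 : Matrix (Fin n) (Fin n) ℂ)‖ := by
          rw [h1, dist_comm]; linarith [had k]
      _ = ε k * (1 + ‖(1 : Matrix (Fin n) (Fin n) ℂ)‖) := by ring
  have htend : Filter.Tendsto (fun k => star (a k) * a k) Filter.atTop (nhds b) := by
    refine tendsto_iff_dist_tendsto_zero.mpr ?_
    refine squeeze_zero (fun k => dist_nonneg) hdistb ?_
    simpa using hεtend.mul_const (1 + ‖(1 : Matrix (Fin n) (Fin n) ℂ)‖)
  -- uniform bound on the aₖ
  set M : ℝ := 1 + ‖b‖ + ‖(1 : Matrix (Fin n) (Fin n) ℂ)‖ with hM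
  have hMnn : 0 ≤ M := by positivity
  have hxknorm : ∀ k, ‖star (a k) * a k‖ ≤ M := by
    intro k
    calc ‖star (a k) * a k‖ = dist (star (a k) * a k) 0 := (dist_zero_right _).symm
      _ ≤ dist (star (a k) * a k) (bk k) + dist (bk k) 0 := dist_triangle _ _ _
      _ ≤ ε k + (‖b‖ + ε k * ‖(1 : Matrix (Fin n) (Fin n) ℂ)‖) := by
          have h2 : dist (bk k) 0 ≤ ‖b‖ + ε k * ‖(1 : Matrix (Fin n) (Fin n) ℂ)‖ := by
            rw [dist_zero_right, hbk]
            refine (norm_add_le _ _).trans ?_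
            gcongr
            rw [norm_smul]
            simp [Complex.norm_real, abs_of_pos (hεpos k)]
          have := had k
          rw [dist_comm] at this
          linarith
      _ ≤ M := by
          have h3 : ε k * ‖(1 : Matrix (Fin n) (Fin n) ℂ)‖ ≤
              ‖(1 : Matrix (Fin n) (Fin n) ℂ)‖ := by
            nlinarith [hεle k, hεpos k, norm_nonneg (1 : Matrix (Fin n) (Fin n) ℂ)]
          rw [hM]; linarith [hεle k]
  have hanorm : ∀ k, ‖a k‖ ≤ Real.sqrt M := by
    intro k
    rw [Matrix.norm_le_iff (Real.sqrt_nonneg M)]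
    intro i j
    have hentry : ‖a k i j‖ ^ 2 ≤ M := by
      have hdiag : ((star (a k) * a k) j j) = ∑ l, (starRingEnd ℂ) (a k l j) * a k l j := by
        simp [Matrix.mul_apply, Matrix.conjTranspose_apply]
      have hre : ((star (a k) * a k) j j).re = ∑ l, Complex.normSq (a k l j) := by
        rw [hdiag, Complex.re_sum]
        refine Finset.sum_congr rfl fun l _ => ?_
        rw [mul_comm, Complex.mul_conj, Complex.ofReal_re]
      have h4 : ‖a k i j‖ ^ 2 = Complex.normSq (a k i j) := by
        rw [Complex.sq_norm]
      have h5 : Complex.normSq (a k i j) ≤ ∑ l, Complex.normSq (a k l j) :=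
        Finset.single_le_sum (f := fun l => Complex.normSq (a k l j))
          (fun l _ => Complex.normSq_nonneg _) (Finset.mem_univ i)
      have h6 : ((star (a k) * a k) j j).re ≤ ‖(star (a k) * a k) j j‖ :=
        Complex.re_le_norm _
      have h7 : ‖(star (a k) * a k) j j‖ ≤ ‖star (a k) * a k‖ :=
        Matrix.norm_entry_le_entrywise_sup_norm _
      calc ‖a k i j‖ ^ 2 = Complex.normSq (a k i j) := h4
        _ ≤ ((star (a k) * a k) j j).re := by rw [hre]; exact h5
        _ ≤ M := le_trans h6 (le_trans h7 (hxknorm k))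
    have := Real.sqrt_le_sqrt hentry
    rwa [Real.sqrt_sq (norm_nonneg _)] at this
  -- extract a convergent subsequence inside the compact set
  have hK : IsCompact (Metric.closedBall (0 : Matrix (Fin n) (Fin n) ℂ) (Real.sqrt M) ∩
      (A : Set (Matrix (Fin n) (Fin n) ℂ))) :=
    (isCompact_closedBall _ _).inter_right hclosed
  have hmem : ∀ k, a k ∈ Metric.closedBall (0 : Matrix (Fin n) (Fin n) ℂ) (Real.sqrt M) ∩
      (A : Set (Matrix (Fin n) (Fin n) ℂ)) := by
    intro k
    exact ⟨by simpa [Metric.mem_closedBall, dist_eq_norm] using hanorm k, haA k⟩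
  obtain ⟨alim, halim, φ, hφ, hφtend⟩ := @IsCompact.tendsto_subseq _ _ (@UniformSpace.firstCountableTopology _ PseudoMetricSpace.toUniformSpace _) _ _ hK hmem
  refine ⟨alim, halim.2, ?_⟩
  have h8 : Filter.Tendsto (fun k => star (a (φ k)) * a (φ k)) Filter.atTop
      (nhds (star alim * alim)) := by
    have hφ' : Filter.Tendsto (a ∘ φ) Filter.atTop (@nhds _ instTopologicalSpaceMatrix alim) := hφtend
    exact (hφ'.star).mul hφ'
  have h9 : Filter.Tendsto (fun k => star (a (φ k)) * a (φ k)) Filter.atTop (nhds b) :=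
    htend.comp (hφ.tendsto_atTop)
  exact tendsto_nhds_unique h9 h8

end Aux

/-- Let `A ⊆ Mₙ(ℂ)` be logmodular, and let `P = P_J ∈ A` be a diagonal projection such that
`(1 − P) A P = {0}`. Then `B = P A P` is logmodular in the corner C*-algebra
`C = P Mₙ(ℂ) P`: every positive semidefinite element `b` of the corner (i.e. `b` positive
semidefinite with `b = P b P`) can be written as `b = c̃* c̃` with `c̃ = P c P ∈ P A P`. -/
theorem corner_of_logmodular_isLogmodular
    {n : ℕ} (A : Subalgebra ℂ (Matrix (Fin n) (Fin n) ℂ))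
    (hclosed : IsClosed (A : Set (Matrix (Fin n) (Fin n) ℂ)))
    (hlog : IsLogmodular A)
    (J : Finset (Fin n)) (P : Matrix (Fin n) (Fin n) ℂ)
    (hP : P = Matrix.diagonal fun i => if i ∈ J then (1 : ℂ) else 0)
    (hPA : P ∈ A)
    (hnoexit : ∀ a ∈ A, (1 - P) * a * P = 0) :
    ∀ b : Matrix (Fin n) (Fin n) ℂ, b.PosSemidef → b = P * b * P →
      ∃ c ∈ A, b = star (P * c * P) * (P * c * P) := by
  intro b hb hbP
  have hP2 : P * P = P := by
    rw [hP, Matrix.diagonal_mul_diagonal]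
    refine congrArg Matrix.diagonal (funext fun i => ?_)
    by_cases h : i ∈ J <;> simp [h]
  have hPstar : star P = P := by
    rw [hP, Matrix.star_eq_conjTranspose, Matrix.diagonal_conjTranspose]
    refine congrArg Matrix.diagonal (funext fun i => ?_)
    by_cases h : i ∈ J <;> simp [h]
  have hQpsd : (1 - P).PosSemidef := by
    have h1 : (1 : Matrix (Fin n) (Fin n) ℂ) - P =
        Matrix.diagonal (fun i => if i ∈ J then 0 else 1) := by
      rw [hP, ← Matrix.diagonal_one, Matrix.diagonal_sub]
      refine congrArg Matrix.diagonal (funext fun i => ?_)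
      by_cases h : i ∈ J <;> simp [h]
    rw [h1]
    exact Matrix.PosSemidef.diagonal fun i => by by_cases h : i ∈ J <;> simp [h]
  have hb' : (b + (1 - P)).PosSemidef := hb.add hQpsd
  obtain ⟨a, haA, hfa⟩ := IsLogmodular.exists_star_mul_self A hclosed hlog _ hb'
  refine ⟨a, haA, ?_⟩
  have haP : a * P = P * (a * P) := by
    have h0 := hnoexit a haA
    rw [sub_mul, one_mul, sub_mul, sub_eq_zero, mul_assoc] at h0
    exact h0
  have hstar : star (P * a * P) = P * star a * P := by
    rw [star_mul, star_mul, hPstar, mul_assoc]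
  have hQP : (1 - P) * P = 0 := by rw [sub_mul, one_mul, hP2, sub_self]
  symm
  calc star (P * a * P) * (P * a * P)
      = P * (star a * (P * (P * (a * P)))) := by rw [hstar]; simp only [mul_assoc]
    _ = P * (star a * (a * P)) := by rw [← haP, ← haP]
    _ = P * ((star a * a) * P) := by simp only [mul_assoc]
    _ = P * ((b + (1 - P)) * P) := by rw [← hfa]
    _ = P * (b * P) := by rw [add_mul, hQP, add_zero]
    _ = b := by rw [← mul_assoc, ← hbP]
end
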